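/- Let (I, f_{1,∞}) be an m-periodic non-autonomous system on I = [0,1]. If (I, f_{1,∞}) is weakly mixing, then it is both ergodically sensitive and syndetically sensitive. -/

import Mathlib

open Set Filter MeasureTheory TopologicalSpace

/-- `iterN f n = f_{n-1} ∘ ⋯ ∘ f_0`, the `n`-th iterate of the non-autonomous system. -/
def iterN {X : Type*} (f : ℕ → X → X) : ℕ → X → X
  | 0 => id
  | n + 1 => f n ∘ iterN f n

/-- Topological transitivity of a non-autonomous system. -/
def NATransitive {X : Type*} [TopologicalSpace X] (f : ℕ → X → X) : Prop :=
  ∀ U V : Set X, IsOpen U → IsOpen V → U.Nonempty → V.Nonempty →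
    ∃ n : ℕ, 0 < n ∧ (iterN f n '' U ∩ V).Nonempty

/-- Weak mixing (order 2). -/
def NAWeaklyMixing {X : Type*} [TopologicalSpace X] (f : ℕ → X → X) : Prop :=
  ∀ U₁ U₂ V₁ V₂ : Set X, IsOpen U₁ → IsOpen U₂ → IsOpen V₁ → IsOpen V₂ →
    U₁.Nonempty → U₂.Nonempty → V₁.Nonempty → V₂.Nonempty →
    ∃ n : ℕ, 0 < n ∧ (iterN f n '' U₁ ∩ V₁).Nonempty ∧ (iterN f n '' U₂ ∩ V₂).Nonempty

/-- Weak mixing of order `m`. -/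
def NAWeaklyMixingOrder {X : Type*} [TopologicalSpace X] (f : ℕ → X → X) (m : ℕ) : Prop :=
  ∀ U V : Fin m → Set X, (∀ i, IsOpen (U i)) → (∀ i, IsOpen (V i)) →
    (∀ i, (U i).Nonempty) → (∀ i, (V i).Nonempty) →
    ∃ n : ℕ, 0 < n ∧ ∀ i, (iterN f n '' U i ∩ V i).Nonempty

/-- Banks's condition. -/
def NABanks {X : Type*} [TopologicalSpace X] (f : ℕ → X → X) : Prop :=
  ∀ U V W : Set X, IsOpen U → IsOpen V → IsOpen W →
    U.Nonempty → V.Nonempty → W.Nonempty →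
    ∃ n : ℕ, 0 < n ∧ (iterN f n '' U ∩ V).Nonempty ∧ (iterN f n '' U ∩ W).Nonempty

/-- Topological mixing. -/
def NAMixing {X : Type*} [TopologicalSpace X] (f : ℕ → X → X) : Prop :=
  ∀ U V : Set X, IsOpen U → IsOpen V → U.Nonempty → V.Nonempty →
    ∃ N : ℕ, ∀ n ≥ N, (iterN f n '' U ∩ V).Nonempty

/-- `blockC f s k = f_{s+k-1} ∘ ⋯ ∘ f_s`. -/
def blockC {X : Type*} (f : ℕ → X → X) (s k : ℕ) : X → X :=
  iterN (fun i => f (s + i)) k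

/-- The `k`-th iterate system `f_{1,∞}^{[k]}`. -/
def kthSys {X : Type*} (f : ℕ → X → X) (k : ℕ) : ℕ → X → X :=
  fun n => blockC f (n * k) k

/-- The induced non-autonomous system on Borel probability measures (pushforwards). -/
noncomputable def inducedM {X : Type*} [MeasurableSpace X] [TopologicalSpace X]
    [BorelSpace X] (f : ℕ → X → X) (hf : ∀ n, Continuous (f n)) :
    ℕ → ProbabilityMeasure X → ProbabilityMeasure X :=
  fun n μ => μ.map ((hf n).measurable.aemeasurable)

/-- The induced non-autonomous system on the hyperspace of non-empty compact subsets. -/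
def inducedK {X : Type*} [TopologicalSpace X] (f : ℕ → X → X) (hf : ∀ n, Continuous (f n)) :
    ℕ → NonemptyCompacts X → NonemptyCompacts X :=
  fun n K => ⟨⟨f n '' (K : Set X), K.isCompact.image (hf n)⟩, K.nonempty.image _⟩

/-- The set `N(U, δ)` of sensitivity times. -/
def NSet {X : Type*} [PseudoMetricSpace X] (f : ℕ → X → X) (U : Set X) (δ : ℝ) : Set ℕ :=
  {n | 0 < n ∧ ∃ x ∈ U, ∃ y ∈ U, δ < dist (iterN f n x) (iterN f n y)}

/-- Sensitive dependence on initial conditions. -/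
def NASensitive {X : Type*} [PseudoMetricSpace X] (f : ℕ → X → X) : Prop :=
  ∃ δ : ℝ, 0 < δ ∧ ∀ x : X, ∀ U : Set X, IsOpen U → x ∈ U →
    ∃ y ∈ U, ∃ n : ℕ, 0 < n ∧ δ < dist (iterN f n x) (iterN f n y)

/-- A thick subset of ℕ. -/
def ThickSet (S : Set ℕ) : Prop := ∀ p : ℕ, ∃ n : ℕ, ∀ j ≤ p, n + j ∈ S

/-- A syndetic subset of ℕ. -/
def SyndeticSet (S : Set ℕ) : Prop := ∃ a : ℕ, ∀ i : ℕ, ∃ j, i ≤ j ∧ j ≤ i + a ∧ j ∈ S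

/-- Upper density of a subset of ℕ. -/
noncomputable def upperDens (S : Set ℕ) : ℝ :=
  Filter.limsup (fun n : ℕ => (Nat.card ↥(S ∩ Set.Iio n) : ℝ) / n) Filter.atTop

/-- Periodic point of a non-autonomous system. -/
def NAPeriodicPt {X : Type*} (f : ℕ → X → X) (x : X) : Prop :=
  ∃ n : ℕ, 0 < n ∧ ∀ k : ℕ, 0 < k → iterN f (n * k) x = x

section WM18aux

set_option linter.unusedSectionVars false

variable {X : Type*} (f : ℕ → X → X)


lemma iterN_zero : iterN f 0 = id := rfl
lemma iterN_succ (n : ℕ) : iterN f (n+1) = f n ∘ iterN f n := rfl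

lemma iterN_continuous {X : Type*} [TopologicalSpace X] (f : ℕ → X → X)
    (hf : ∀ n, Continuous (f n)) (n : ℕ) : Continuous (iterN f n) := by
  induction n with
  | zero => exact continuous_id
  | succ n ih => exact (hf n).comp ih

lemma blockC_zero (s : ℕ) : blockC f s 0 = id := rfl
lemma blockC_succ (s k : ℕ) : blockC f s (k+1) = f (s+k) ∘ blockC f s k := rfl

lemma blockC_continuous {X : Type*} [TopologicalSpace X] (f : ℕ → X → X)
    (hf : ∀ n, Continuous (f n)) (s k : ℕ) : Continuous (blockC f s k) :=
  iterN_continuous _ (fun i => hf (s+i)) k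

lemma iterN_add (n k : ℕ) : iterN f (n + k) = blockC f n k ∘ iterN f n := by
  induction k with
  | zero => rfl
  | succ k ih =>
    rw [← Nat.add_assoc, iterN_succ, ih, blockC_succ]
    rfl

lemma blockC_add (s t₁ t₂ : ℕ) :
    blockC f s (t₁ + t₂) = blockC f (s + t₁) t₂ ∘ blockC f s t₁ := by
  induction t₂ with
  | zero => rfl
  | succ k ih =>
    rw [← Nat.add_assoc, blockC_succ, ih, blockC_succ]
    have : s + (t₁ + k) = s + t₁ + k := by ring
    rw [this]
    rfl

variable {m : ℕ} (hm : 0 < m) (hper : ∀ n, f (n + m) = f n)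
include hm hper

lemma f_per_mul : ∀ q r, f (r + q * m) = f r := by
  intro q
  induction q with
  | zero => simp
  | succ q ih =>
    intro r
    have : r + (q+1) * m = (r + q * m) + m := by ring
    rw [this, hper, ih]

lemma f_mod (n : ℕ) : f n = f (n % m) := by
  conv_lhs => rw [← Nat.mod_add_div' n m, f_per_mul f hm hper]

lemma blockC_congr {s s' : ℕ} (hs : s % m = s' % m) (k : ℕ) :
    blockC f s k = blockC f s' k := by
  induction k with
  | zero => rfl
  | succ k ih =>
    rw [blockC_succ, blockC_succ, ih]
    have : f (s + k) = f (s' + k) := by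
      rw [f_mod f hm hper (s+k), f_mod f hm hper (s'+k),
        Nat.ModEq.add_right k hs]
    rw [this]


end WM18aux

lemma icc_preconnected (c d : unitInterval) : IsPreconnected (Set.Icc c d) := by
  have himg : Set.Icc c d = (Set.projIcc (0:ℝ) 1 zero_le_one) '' (Set.Icc (c:ℝ) (d:ℝ)) := by
    ext y
    constructor
    · intro hy
      exact ⟨y, ⟨hy.1, hy.2⟩, by simp [Set.projIcc_val]⟩
    · rintro ⟨t, ht, rfl⟩
      have ht0 : (t:ℝ) ∈ unitInterval := ⟨le_trans c.2.1 ht.1, le_trans ht.2 d.2.2⟩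
      rw [Set.projIcc_of_mem _ ht0]
      exact ⟨Subtype.coe_le_coe.mp (by simpa using ht.1),
        Subtype.coe_le_coe.mp (by simpa using ht.2)⟩
  rw [himg]
  exact isPreconnected_Icc.image _ continuous_projIcc.continuousOn

lemma subInterval (G : Set unitInterval) (hG : IsOpen G) (hne : G.Nonempty) :
    ∃ c d : unitInterval, c < d ∧ Set.Icc c d ⊆ G := by
  obtain ⟨x, hx⟩ := hne
  obtain ⟨ε, hε, hball⟩ := Metric.isOpen_iff.mp hG x hx
  have hx0 : (0:ℝ) ≤ (x:ℝ) := x.2.1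
  have hx1 : (x:ℝ) ≤ 1 := x.2.2
  set cr : ℝ := max ((x:ℝ) - ε/2) 0 with hcr
  set dr : ℝ := min ((x:ℝ) + ε/2) 1 with hdr
  have hcmem : cr ∈ unitInterval := ⟨le_max_right _ _, by
    apply max_le <;> linarith⟩
  have hdmem : dr ∈ unitInterval := ⟨le_min (by linarith) zero_le_one, min_le_right _ _⟩
  have hcd : cr < dr := by
    rcases lt_or_eq_of_le hx1 with h1 | h1
    · have : cr ≤ (x:ℝ) := max_le (by linarith) hx0
      exact lt_of_le_of_lt this (lt_min (by linarith) h1)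
    · have : dr = 1 := by rw [hdr, min_eq_right]; linarith
      rw [this]
      exact max_lt (by linarith) one_pos
  refine ⟨⟨cr, hcmem⟩, ⟨dr, hdmem⟩, Subtype.mk_lt_mk.mpr hcd, ?_⟩
  intro y hy
  apply hball
  have h1 : cr ≤ (y:ℝ) := hy.1
  have h2 : (y:ℝ) ≤ dr := hy.2
  have h3 : (x:ℝ) - ε/2 ≤ cr := le_max_left _ _
  have h4 : dr ≤ (x:ℝ) + ε/2 := min_le_left _ _
  rw [Metric.mem_ball, Subtype.dist_eq, Real.dist_eq]
  rw [abs_sub_lt_iff]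
  constructor <;> linarith

lemma exists_modulus (f : ℕ → unitInterval → unitInterval) (hf : ∀ n, Continuous (f n))
    (N : ℕ) : ∃ η : ℝ, 0 < η ∧ ∀ n ≤ N, ∀ x y : unitInterval,
      dist x y < η → dist (iterN f n x) (iterN f n y) ≤ 1/2 := by
  induction N with
  | zero =>
    refine ⟨1/2, by norm_num, ?_⟩
    intro n hn x y hd
    interval_cases n
    exact le_of_lt hd
  | succ N ih =>
    obtain ⟨η₀, hη₀, h₀⟩ := ih
    have huc : UniformContinuous (iterN f (N+1)) :=
      CompactSpace.uniformContinuous_of_continuous (iterN_continuous f hf (N+1))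
    obtain ⟨δ, hδ, hδ'⟩ := Metric.uniformContinuous_iff.mp huc (1/2) (by norm_num)
    refine ⟨min η₀ δ, lt_min hη₀ hδ, ?_⟩
    intro n hn x y hd
    rcases Nat.lt_succ_iff_lt_or_eq.mp (Nat.lt_succ_of_le hn) with h | rfl
    · exact h₀ n (Nat.lt_succ_iff.mp h) x y (lt_of_lt_of_le hd (min_le_left _ _))
    · exact le_of_lt (hδ' (lt_of_lt_of_le hd (min_le_right _ _)))


/-- The target interval `L' = [1/5, 4/5]` inside the unit interval. -/
def Ltgt : Set unitInterval := Subtype.val ⁻¹' (Set.Icc (1/5 : ℝ) (4/5))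

lemma grow (f : ℕ → unitInterval → unitInterval) (hf : ∀ n, Continuous (f n))
    (h : NAWeaklyMixing f) (G : Set unitInterval) (hG : IsOpen G) (hne : G.Nonempty)
    (N : ℕ) :
    ∃ M : ℕ, N < M ∧ ∃ c d : unitInterval, c < d ∧ Set.Icc c d ⊆ G ∧
      Ltgt ⊆ iterN f M '' Set.Icc c d := by
  obtain ⟨η, hη, hmod⟩ := exists_modulus f hf N
  obtain ⟨w, hw⟩ := hne
  have hG' : IsOpen (G ∩ Metric.ball w (η/2)) := hG.inter Metric.isOpen_ball
  have hne' : (G ∩ Metric.ball w (η/2)).Nonempty :=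
    ⟨w, hw, Metric.mem_ball_self (by linarith)⟩
  obtain ⟨c, d, hcd, hsub⟩ := subInterval _ hG' hne'
  set O : Set unitInterval := Subtype.val ⁻¹' (Set.Ioo (c:ℝ) (d:ℝ)) with hO
  have hOopen : IsOpen O := isOpen_Ioo.preimage continuous_subtype_val
  have hcdR : (c:ℝ) < (d:ℝ) := hcd
  have hOne : O.Nonempty := by
    refine ⟨⟨((c:ℝ) + d)/2, ⟨by have := c.2.1; have := d.2.1; linarith,
      by have := c.2.2; have := d.2.2; linarith⟩⟩, ?_⟩
    exact ⟨by dsimp; linarith, by dsimp; linarith⟩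
  have hOIcc : O ⊆ Set.Icc c d := by
    intro y hy
    exact ⟨Subtype.coe_le_coe.mp (le_of_lt hy.1), Subtype.coe_le_coe.mp (le_of_lt hy.2)⟩
  set V₁ : Set unitInterval := Subtype.val ⁻¹' (Set.Iio (1/5 : ℝ)) with hV₁
  set V₂ : Set unitInterval := Subtype.val ⁻¹' (Set.Ioi (4/5 : ℝ)) with hV₂
  have hV₁o : IsOpen V₁ := isOpen_Iio.preimage continuous_subtype_val
  have hV₂o : IsOpen V₂ := isOpen_Ioi.preimage continuous_subtype_val
  have hV₁ne : V₁.Nonempty := ⟨⟨0, le_refl _, zero_le_one⟩, by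
    simp only [hV₁, Set.mem_preimage, Set.mem_Iio]; norm_num⟩
  have hV₂ne : V₂.Nonempty := ⟨⟨1, zero_le_one, le_refl _⟩, by
    simp only [hV₂, Set.mem_preimage, Set.mem_Ioi]; norm_num⟩
  obtain ⟨M, hM0, hM1, hM2⟩ := h O O V₁ V₂ hOopen hOopen hV₁o hV₂o hOne hOne hV₁ne hV₂ne
  obtain ⟨p, ⟨x₁, hx₁O, hx₁e⟩, hpV⟩ := hM1
  obtain ⟨q, ⟨x₂, hx₂O, hx₂e⟩, hqV⟩ := hM2
  have hpV' : (p:ℝ) < 1/5 := hpV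
  have hqV' : (4/5:ℝ) < q := hqV
  -- M > N
  have hMN : N < M := by
    by_contra hle
    push_neg at hle
    have hd12 : dist x₁ x₂ < η := by
      have h1 : dist x₁ w < η/2 := (hsub (hOIcc hx₁O)).2
      have h2 : dist x₂ w < η/2 := (hsub (hOIcc hx₂O)).2
      calc dist x₁ x₂ ≤ dist x₁ w + dist w x₂ := dist_triangle _ _ _
        _ = dist x₁ w + dist x₂ w := by rw [dist_comm w x₂]
        _ < η := by linarith
    have := hmod M hle x₁ x₂ hd12
    rw [hx₁e, hx₂e, Subtype.dist_eq, Real.dist_eq] at this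
    have : |(p:ℝ) - q| ≤ 1/2 := this
    rw [abs_sub_le_iff] at this
    linarith [this.1, this.2]
  -- covering
  refine ⟨M, hMN, c, d, hcd, fun y hy => (hsub hy).1, ?_⟩
  set B : Set ℝ := (fun y : unitInterval => ((iterN f M y : unitInterval) : ℝ)) '' Set.Icc c d
    with hB
  have hBconn : IsPreconnected B :=
    (icc_preconnected c d).image _
      (continuous_subtype_val.comp (iterN_continuous f hf M)).continuousOn
  have hpB : (p:ℝ) ∈ B := ⟨x₁, hOIcc hx₁O, by simp only []; rw [hx₁e]⟩
  have hqB : (q:ℝ) ∈ B := ⟨x₂, hOIcc hx₂O, by simp only []; rw [hx₂e]⟩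
  have hIccB : Set.Icc (p:ℝ) (q:ℝ) ⊆ B := hBconn.Icc_subset hpB hqB
  intro z hz
  have hz' : (z:ℝ) ∈ Set.Icc (1/5 : ℝ) (4/5) := hz
  have hzB : (z:ℝ) ∈ B := hIccB ⟨by linarith [hz'.1], by linarith [hz'.2]⟩
  obtain ⟨y, hy, hye⟩ := hzB
  exact ⟨y, hy, Subtype.ext hye⟩


lemma master (f : ℕ → unitInterval → unitInterval) (hf : ∀ n, Continuous (f n))
    (m : ℕ) (hm : 0 < m) (hper : ∀ n, f (n + m) = f n) (h : NAWeaklyMixing f)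
    (U : Set unitInterval) (hU : IsOpen U) (hUne : U.Nonempty) :
    ∃ c T : ℕ, 0 < c ∧ 0 < T ∧ ∀ k : ℕ, (c + k*T) ∈ NSet f U (1/2 : ℝ) := by
  obtain ⟨M₀, hM₀pos, c₀, d₀, hc₀d₀, hJU, hcov₀⟩ := grow f hf h U hU hUne 0
  set J : Set unitInterval := Set.Icc c₀ d₀ with hJ
  -- the step lemma
  have step : ∀ N, Ltgt ⊆ iterN f N '' J →
      ∃ M, N < M ∧ (Ltgt ⊆ iterN f M '' J) ∧ (Ltgt ⊆ blockC f N (M - N) '' Ltgt) := by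
    intro N hN
    set W : Set unitInterval :=
      (iterN f N) ⁻¹' (Subtype.val ⁻¹' (Set.Ioo (1/5 : ℝ) (4/5))) with hW
    have hWopen : IsOpen W :=
      ((isOpen_Ioo.preimage continuous_subtype_val).preimage (iterN_continuous f hf N))
    have hWne : W.Nonempty := by
      have hmem : (⟨1/2, by norm_num, by norm_num⟩ : unitInterval) ∈ Ltgt := by
        constructor <;> norm_num
      obtain ⟨x, hxJ, hxe⟩ := hN hmem
      refine ⟨x, ?_⟩
      simp only [hW, Set.mem_preimage, hxe, Set.mem_Ioo]
      norm_num
    obtain ⟨M, hNM, c, d, hcd, hcdW, hcov⟩ := grow f hf h W hWopen hWne N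
    have hMsplit : N + (M - N) = M := Nat.add_sub_cancel' (le_of_lt hNM)
    have hkey : iterN f M '' Set.Icc c d
        = blockC f N (M-N) '' (iterN f N '' Set.Icc c d) := by
      rw [← Set.image_comp, ← iterN_add, hMsplit]
    have hIccL : iterN f N '' Set.Icc c d ⊆ Ltgt := by
      rintro _ ⟨y, hy, rfl⟩
      have hyW := hcdW hy
      simp only [hW, Set.mem_preimage, Set.mem_Ioo] at hyW
      exact ⟨le_of_lt hyW.1, le_of_lt hyW.2⟩
    have hCL : Ltgt ⊆ blockC f N (M - N) '' Ltgt := by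
      have h1 : Ltgt ⊆ blockC f N (M-N) '' (iterN f N '' Set.Icc c d) := by
        rw [← hkey]; exact hcov
      exact h1.trans (Set.image_mono hIccL)
    have hCovM : Ltgt ⊆ iterN f M '' J := by
      have hkey2 : iterN f M '' J = blockC f N (M-N) '' (iterN f N '' J) := by
        rw [← Set.image_comp, ← iterN_add, hMsplit]
      rw [hkey2]
      exact hCL.trans (Set.image_mono hN)
    exact ⟨M, hNM, hCovM, hCL⟩
  choose F hF1 hF2 hF3 using step
  set seq : ℕ → {n : ℕ // Ltgt ⊆ iterN f n '' J} :=
    fun i => Nat.rec ⟨M₀, hcov₀⟩ (fun _ p => ⟨F p.1 p.2, hF2 p.1 p.2⟩) i with hseq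
  have hseq0 : (seq 0).1 = M₀ := rfl
  have hlt : ∀ i, (seq i).1 < (seq (i+1)).1 := fun i => hF1 _ _
  have hCLs : ∀ i, Ltgt ⊆ blockC f (seq i).1 ((seq (i+1)).1 - (seq i).1) '' Ltgt :=
    fun i => hF3 _ _
  clear_value seq
  have hmono : Monotone (fun i => (seq i).1) :=
    monotone_nat_of_le_succ (fun i => le_of_lt (hlt i))
  have hsmono : StrictMono (fun i => (seq i).1) := strictMono_nat_of_lt_succ hlt
  have hCLcomp : ∀ s t₁ t₂, (Ltgt ⊆ blockC f s t₁ '' Ltgt) →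
      (Ltgt ⊆ blockC f (s+t₁) t₂ '' Ltgt) → (Ltgt ⊆ blockC f s (t₁+t₂) '' Ltgt) := by
    intro s t₁ t₂ h1 h2
    rw [blockC_add f s t₁ t₂, Set.image_comp]
    exact h2.trans (Set.image_mono h1)
  have hchain : ∀ i j, i ≤ j →
      Ltgt ⊆ blockC f (seq i).1 ((seq j).1 - (seq i).1) '' Ltgt := by
    intro i j hij
    induction j, hij using Nat.le_induction with
    | base =>
      have : (seq i).1 - (seq i).1 = 0 := Nat.sub_self _
      rw [this]
      intro z hz
      exact ⟨z, hz, rfl⟩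
    | succ j hij ih =>
      have e : (seq (j+1)).1 - (seq i).1
          = ((seq j).1 - (seq i).1) + ((seq (j+1)).1 - (seq j).1) := by
        have h1 : (seq i).1 ≤ (seq j).1 := hmono hij
        have h2 : (seq j).1 < (seq (j+1)).1 := hlt j
        omega
      rw [e]
      apply hCLcomp
      · exact ih
      · have e2 : (seq i).1 + ((seq j).1 - (seq i).1) = (seq j).1 := by
          have h1 : (seq i).1 ≤ (seq j).1 := hmono hij
          omega
        rw [e2]
        exact hCLs j
  -- pigeonhole on residues
  obtain ⟨a, b, hab, he⟩ := Fintype.exists_ne_map_eq_of_card_lt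
    (fun i : Fin (m+1) => (⟨(seq i.1).1 % m, Nat.mod_lt _ hm⟩ : Fin m)) (by simp)
  have he' : (seq a.1).1 % m = (seq b.1).1 % m := by
    simpa [Fin.ext_iff] using he
  -- wlog a < b
  obtain ⟨i, j, hij, hmodeq⟩ : ∃ i j : ℕ, i < j ∧ (seq i).1 % m = (seq j).1 % m := by
    rcases lt_or_gt_of_ne (fun hc => hab (Fin.ext hc) : (a:ℕ) ≠ b) with hlt' | hlt'
    · exact ⟨a, b, hlt', he'⟩
    · exact ⟨b, a, hlt', he'.symm⟩
  set c : ℕ := (seq i).1 with hc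
  set T : ℕ := (seq j).1 - (seq i).1 with hT
  have hTpos : 0 < T := Nat.sub_pos_of_lt (hsmono hij)
  have hcpos : 0 < c := by
    have : M₀ ≤ c := hseq0 ▸ hmono (Nat.zero_le i)
    omega
  have hdvd : m ∣ T := (Nat.modEq_iff_dvd' (le_of_lt (hsmono hij))).mp hmodeq
  have hCLcT : Ltgt ⊆ blockC f c T '' Ltgt := hchain i j (le_of_lt hij)
  -- arithmetic progression of covering times
  have hAP : ∀ k : ℕ, Ltgt ⊆ iterN f (c + k*T) '' J := by
    intro k
    induction k with
    | zero => simpa using (seq i).2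
    | succ k ih =>
      have e : c + (k+1)*T = (c + k*T) + T := by ring
      rw [e, iterN_add, Set.image_comp]
      have hph : (c + k*T) % m = c % m := by
        obtain ⟨u, hu⟩ := hdvd
        have e2 : c + k*T = c + (k*u)*m := by rw [hu]; ring
        rw [e2, Nat.add_mul_mod_self_right]
      rw [blockC_congr f hm hper hph T]
      exact hCLcT.trans (Set.image_mono ih)
  refine ⟨c, T, hcpos, hTpos, ?_⟩
  intro k
  have h15 : (⟨1/5, by norm_num, by norm_num⟩ : unitInterval) ∈ Ltgt := by
    constructor <;> norm_num
  have h45 : (⟨4/5, by norm_num, by norm_num⟩ : unitInterval) ∈ Ltgt := by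
    constructor <;> norm_num
  obtain ⟨x, hxJ, hxe⟩ := hAP k h15
  obtain ⟨y, hyJ, hye⟩ := hAP k h45
  refine ⟨by omega, x, hJU hxJ, y, hJU hyJ, ?_⟩
  rw [hxe, hye, Subtype.dist_eq, Real.dist_eq]
  rw [show ((⟨1/5, by norm_num, by norm_num⟩ : unitInterval) : ℝ) = 1/5 from rfl,
    show ((⟨4/5, by norm_num, by norm_num⟩ : unitInterval) : ℝ) = 4/5 from rfl]
  rw [show (1/5 : ℝ) - 4/5 = -(3/5) by norm_num, abs_neg,
    abs_of_pos (by norm_num : (0:ℝ) < 3/5)]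
  norm_num


lemma syndetic_of_AP {S : Set ℕ} {c T : ℕ} (hT : 0 < T)
    (hAP : ∀ k : ℕ, c + k*T ∈ S) : SyndeticSet S := by
  refine ⟨c + T, ?_⟩
  intro i0
  by_cases hic : i0 ≤ c
  · exact ⟨c, hic, by omega, by simpa using hAP 0⟩
  · push_neg at hic
    set dd := i0 - c with hdd
    set q := dd / T with hq
    obtain ⟨r, hr1, hr2⟩ : ∃ r, T * q + r = dd ∧ r < T :=
      ⟨dd % T, Nat.div_add_mod dd T, Nat.mod_lt _ hT⟩
    refine ⟨c + (q+1)*T, ?_, ?_, hAP (q+1)⟩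
    · have : c + (q+1)*T = c + T*q + T := by ring
      omega
    · have : c + (q+1)*T = c + T*q + T := by ring
      omega

lemma dens_of_AP {S : Set ℕ} {c T : ℕ} (hT : 0 < T)
    (hAP : ∀ k : ℕ, c + k*T ∈ S) : 0 < upperDens S := by
  set g : ℕ → ℝ := fun n => (Nat.card ↥(S ∩ Set.Iio n) : ℝ) / n with hg
  have hb : ∀ n, g n ≤ 1 := by
    intro n
    rcases Nat.eq_zero_or_pos n with rfl | hn
    · simp [hg]
    · have hcard : Nat.card ↥(S ∩ Set.Iio n) ≤ n := by
        rw [Nat.card_coe_set_eq]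
        calc (S ∩ Set.Iio n).ncard ≤ (Set.Iio n).ncard :=
              Set.ncard_le_ncard inter_subset_right (Set.finite_Iio n)
          _ = n := by
              rw [← Nat.card_coe_set_eq,
                Nat.card_eq_card_finite_toFinset (Set.finite_Iio n)]
              simp
      rw [hg]
      apply div_le_one_of_le₀
      · exact_mod_cast hcard
      · positivity
  have hbdd : IsBoundedUnder (· ≤ ·) atTop g := Filter.isBoundedUnder_of ⟨1, hb⟩
  have hfreq : ∃ᶠ n in atTop, (1/(2*T) : ℝ) ≤ g n := by
    rw [Filter.frequently_atTop]
    intro a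
    set K := max a c with hK
    set n := c + K*T + 1 with hn
    have hKn : K ≤ n := by
      have : K ≤ K * T := Nat.le_mul_of_pos_right _ hT
      omega
    refine ⟨n, le_trans (le_max_left a c) hKn, ?_⟩
    -- card lower bound
    have hinj : Function.Injective (fun k : ℕ => c + k*T) := by
      intro k₁ k₂ hk
      simp only [add_right_inj] at hk
      exact Nat.eq_of_mul_eq_mul_right hT hk
    have hsub : (fun k : ℕ => c + k*T) '' (Set.Iic K) ⊆ S ∩ Set.Iio n := by
      rintro _ ⟨k, hk, rfl⟩
      refine ⟨hAP k, ?_⟩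
      simp only [Set.mem_Iio]
      have : k * T ≤ K * T := Nat.mul_le_mul_right _ hk
      omega
    have hcard1 : Nat.card ↥((fun k : ℕ => c + k*T) '' (Set.Iic K)) = K + 1 := by
      rw [Nat.card_coe_set_eq, Set.ncard_image_of_injective _ hinj,
        ← Nat.card_coe_set_eq, Nat.card_eq_card_finite_toFinset (Set.finite_Iic K)]
      simp
    have hcard2 : K + 1 ≤ Nat.card ↥(S ∩ Set.Iio n) := by
      rw [← hcard1, Nat.card_coe_set_eq, Nat.card_coe_set_eq]
      exact Set.ncard_le_ncard hsub ((Set.finite_Iio n).inter_of_right S)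
    have hnpos : (0:ℝ) < n := by positivity
    have hTR : (1:ℝ) ≤ T := by exact_mod_cast hT
    have hcK : (c:ℝ) ≤ K := by exact_mod_cast le_max_right a c
    have hKT : (K:ℝ) ≤ (K:ℝ)*T := le_mul_of_one_le_right (by positivity) hTR
    have h1 : (1/(2*T) : ℝ) ≤ (K+1)/n := by
      rw [div_le_div_iff₀ (by positivity) hnpos]
      have hne : (n:ℝ) = c + K*T + 1 := by exact_mod_cast congrArg Nat.cast hn
      rw [hne]
      nlinarith [hcK, hKT, hTR]
    have h2 : ((K:ℝ)+1)/n ≤ g n := by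
      have hc2 : ((K:ℝ)+1) ≤ (Nat.card ↥(S ∩ Set.Iio n) : ℝ) := by exact_mod_cast hcard2
      exact (div_le_div_iff_of_pos_right hnpos).mpr hc2
    exact le_trans h1 h2
  have hlim : (1/(2*T) : ℝ) ≤ limsup g atTop :=
    Filter.le_limsup_of_frequently_le hfreq hbdd
  have : upperDens S = limsup g atTop := rfl
  rw [this]
  exact lt_of_lt_of_le (by positivity) hlim


/-- an `m`-periodic weakly mixing non-autonomous system on `[0,1]` is
both ergodically sensitive and syndetically sensitive. -/
theorem periodic_interval_weaklyMixing_ergodic_syndetic_sensitive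
    (f : ℕ → unitInterval → unitInterval) (hf : ∀ n, Continuous (f n)) (m : ℕ)
    (hm : 0 < m) (hper : ∀ n, f (n + m) = f n) (h : NAWeaklyMixing f) :
    (∃ δ : ℝ, 0 < δ ∧ ∀ U : Set unitInterval, IsOpen U → U.Nonempty →
        0 < upperDens (NSet f U δ)) ∧
      (∃ δ : ℝ, 0 < δ ∧ ∀ U : Set unitInterval, IsOpen U → U.Nonempty →
        SyndeticSet (NSet f U δ)) := by
  constructor
  · refine ⟨1/2, by norm_num, ?_⟩
    intro U hU hne
    obtain ⟨c, T, hc, hT, hAP⟩ := master f hf m hm hper h U hU hne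
    exact dens_of_AP hT hAP
  · refine ⟨1/2, by norm_num, ?_⟩
    intro U hU hne
    obtain ⟨c, T, hc, hT, hAP⟩ := master f hf m hm hper h U hU hne
    exact syndetic_of_AP hT hAP
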